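/- Let b ∈ ℝⁿ, λ₁, λ₂ ≥ 0, c ∈ ℝ and f(x) = ½xᵀx + bᵀx + c + λ₁‖x‖₂ + λ₂‖x‖₁. Let S = {i : |bᵢ| < λ₂} and S̄ its complement. If x⁰ minimizes f, then the restriction x⁰| S̄ minimizes g(y) = ½yᵀy + (b_S̄ − λ₂ sgn(b_S̄))ᵀy + c + λ₁‖y‖₂ over y ∈ ℝ^{S̄}. -/

import Mathlib

open Finset

theorem stmt_1 (n : ℕ) (b : Fin n → ℝ) (lam1 lam2 c : ℝ)
    (hlam1 : 0 ≤ lam1) (hlam2 : 0 ≤ lam2)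
    (f : (Fin n → ℝ) → ℝ)
    (hf : ∀ x, f x = (1/2) * ∑ i, (x i)^2 + ∑ i, b i * x i + c
      + lam1 * Real.sqrt (∑ i, (x i)^2) + lam2 * ∑ i, |x i|)
    (S : Finset (Fin n)) (hS : S = Finset.univ.filter (fun i => |b i| < lam2))
    (g : (Fin n → ℝ) → ℝ)
    (hg : ∀ y, g y = (1/2) * ∑ i ∈ Sᶜ, (y i)^2
      + ∑ i ∈ Sᶜ, (b i - lam2 * Real.sign (b i)) * y i + c
      + lam1 * Real.sqrt (∑ i ∈ Sᶜ, (y i)^2))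
    (x0 : Fin n → ℝ) (hmin : ∀ x, f x0 ≤ f x) :
    ∀ y : Fin n → ℝ, g x0 ≤ g y := by
  intro y
  have hsplit : ∀ (h : Fin n → ℝ), ∑ i ∈ S, h i + ∑ i ∈ Sᶜ, h i = ∑ i, h i :=
    fun h => Finset.sum_add_sum_compl S h
  have hSc : ∀ i ∈ Sᶜ, lam2 ≤ |b i| := by
    intro i hi
    rw [hS, Finset.mem_compl, Finset.mem_filter] at hi
    push_neg at hi
    exact hi (Finset.mem_univ i)
  have hSmem : ∀ i ∈ S, |b i| < lam2 := by
    intro i hi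
    rw [hS, Finset.mem_filter] at hi
    exact hi.2
  have habs_sign : ∀ r : ℝ, |Real.sign r| ≤ 1 := by
    intro r
    rcases Real.sign_apply_eq r with h | h | h <;> rw [h] <;> norm_num
  -- Step 1 : g x0 ≤ f x0
  have h1 : g x0 ≤ f x0 := by
    rw [hf, hg]
    have e1 := hsplit (fun i => (x0 i)^2)
    have e2 := hsplit (fun i => b i * x0 i)
    have e3 := hsplit (fun i => |x0 i|)
    have hsq : lam1 * Real.sqrt (∑ i ∈ Sᶜ, (x0 i)^2)
        ≤ lam1 * Real.sqrt (∑ i, (x0 i)^2) := by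
      apply mul_le_mul_of_nonneg_left _ hlam1
      apply Real.sqrt_le_sqrt
      have hnn : 0 ≤ ∑ i ∈ S, (x0 i)^2 :=
        Finset.sum_nonneg fun i _ => sq_nonneg (x0 i)
      linarith
    have h2 : ∑ i ∈ Sᶜ, (b i - lam2 * Real.sign (b i)) * x0 i
        ≤ ∑ i ∈ Sᶜ, (b i * x0 i + lam2 * |x0 i|) := by
      apply Finset.sum_le_sum
      intro i _
      have h1' : |Real.sign (b i) * x0 i| ≤ |x0 i| := by
        rw [abs_mul]
        nlinarith [habs_sign (b i), abs_nonneg (x0 i)]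
      have h2' := neg_abs_le (Real.sign (b i) * x0 i)
      nlinarith
    have h3 : (0:ℝ) ≤ ∑ i ∈ S, ((1/2) * (x0 i)^2 + (b i * x0 i + lam2 * |x0 i|)) := by
      apply Finset.sum_nonneg
      intro i hi
      have hb := hSmem i hi
      have h1' := neg_abs_le (b i * x0 i)
      have h2' : |b i * x0 i| = |b i| * |x0 i| := abs_mul _ _
      nlinarith [sq_nonneg (x0 i), abs_nonneg (x0 i)]
    have e4 : ∑ i ∈ Sᶜ, (b i * x0 i + lam2 * |x0 i|)
        = ∑ i ∈ Sᶜ, b i * x0 i + lam2 * ∑ i ∈ Sᶜ, |x0 i| := by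
      rw [Finset.sum_add_distrib, Finset.mul_sum]
    have e5 : ∑ i ∈ S, ((1/2) * (x0 i)^2 + (b i * x0 i + lam2 * |x0 i|))
        = (1/2) * ∑ i ∈ S, (x0 i)^2 + (∑ i ∈ S, b i * x0 i + lam2 * ∑ i ∈ S, |x0 i|) := by
      rw [Finset.sum_add_distrib, Finset.sum_add_distrib, Finset.mul_sum, Finset.mul_sum]
    rw [e4] at h2
    rw [e5] at h3
    have e6 : lam2 * ∑ i, |x0 i| = lam2 * ∑ i ∈ S, |x0 i| + lam2 * ∑ i ∈ Sᶜ, |x0 i| := by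
      rw [← e3]; ring
    linarith
  -- Step 2 : f x0 ≤ g y
  have h2 : f x0 ≤ g y := by
    rcases eq_or_lt_of_le hlam2 with h0 | hpos
    · -- lam2 = 0
      have hSe : S = ∅ := by
        rw [hS]
        apply Finset.filter_false_of_mem
        intro i _
        rw [← h0]
        exact not_lt.2 (abs_nonneg (b i))
      have hgy : g y = f y := by
        rw [hg, hf, hSe, Finset.compl_empty, ← h0]
        simp
      rw [hgy]
      exact hmin y
    · -- lam2 > 0
      set z : Fin n → ℝ := fun i => if i ∈ S then 0 else -Real.sign (b i) * |y i| with hz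
      have hzS : ∀ i ∈ S, z i = 0 := by intro i hi; simp [hz, hi]
      have hzSc : ∀ i ∈ Sᶜ, z i = -Real.sign (b i) * |y i| := by
        intro i hi; simp [hz, Finset.mem_compl.mp hi]
      have hsgn : ∀ i ∈ Sᶜ, Real.sign (b i) = 1 ∨ Real.sign (b i) = -1 := by
        intro i hi
        have hb : b i ≠ 0 := by
          intro h
          have := hSc i hi
          rw [h, abs_zero] at this
          linarith
        rcases Real.sign_apply_eq_of_ne_zero (b i) hb with h | h
        · right; exact h
        · left; exact h
      have ez1 : ∑ i, (z i)^2 = ∑ i ∈ Sᶜ, (y i)^2 := by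
        rw [← hsplit (fun i => (z i)^2)]
        have hS0 : ∑ i ∈ S, (z i)^2 = 0 :=
          Finset.sum_eq_zero fun i hi => by rw [hzS i hi]; ring
        rw [hS0, zero_add]
        apply Finset.sum_congr rfl
        intro i hi
        rw [hzSc i hi]
        rcases hsgn i hi with h | h <;> rw [h] <;> rw [← sq_abs (y i)] <;> ring
      have ez2 : ∑ i, b i * z i = ∑ i ∈ Sᶜ, (-(|b i| * |y i|)) := by
        rw [← hsplit (fun i => b i * z i)]
        have hS0 : ∑ i ∈ S, b i * z i = 0 :=
          Finset.sum_eq_zero fun i hi => by rw [hzS i hi]; ring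
        rw [hS0, zero_add]
        apply Finset.sum_congr rfl
        intro i hi
        rw [hzSc i hi]
        rcases lt_trichotomy (b i) 0 with h | h | h
        · rw [Real.sign_of_neg h, abs_of_neg h]; ring
        · exfalso
          rcases hsgn i hi with h' | h' <;> rw [h, Real.sign_zero] at h' <;> norm_num at h'
        · rw [Real.sign_of_pos h, abs_of_pos h]; ring
      have ez3 : ∑ i, |z i| = ∑ i ∈ Sᶜ, |y i| := by
        rw [← hsplit (fun i => |z i|)]
        have hS0 : ∑ i ∈ S, |z i| = 0 :=
          Finset.sum_eq_zero fun i hi => by rw [hzS i hi, abs_zero]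
        rw [hS0, zero_add]
        apply Finset.sum_congr rfl
        intro i hi
        rw [hzSc i hi, abs_mul, abs_abs, abs_neg]
        rcases hsgn i hi with h | h <;> rw [h] <;> norm_num
      have hfz : f x0 ≤ f z := hmin z
      have key : lam2 * ∑ i ∈ Sᶜ, |y i| + ∑ i ∈ Sᶜ, (-(|b i| * |y i|))
          ≤ ∑ i ∈ Sᶜ, (b i - lam2 * Real.sign (b i)) * y i := by
        rw [Finset.mul_sum, ← Finset.sum_add_distrib]
        apply Finset.sum_le_sum
        intro i hi
        have hb := hSc i hi
        have habs : |b i - lam2 * Real.sign (b i)| = |b i| - lam2 := by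
          rcases lt_trichotomy (b i) 0 with h | h | h
          · rw [Real.sign_of_neg h, abs_of_neg h]
            rw [abs_of_nonpos]
            · ring
            · rw [abs_of_neg h] at hb; linarith
          · exfalso
            rcases hsgn i hi with h' | h' <;> rw [h, Real.sign_zero] at h' <;> norm_num at h'
          · rw [Real.sign_of_pos h, abs_of_pos h]
            rw [abs_of_nonneg]
            · ring
            · rw [abs_of_pos h] at hb; linarith
        have h1' := neg_abs_le ((b i - lam2 * Real.sign (b i)) * y i)
        have h2' : |(b i - lam2 * Real.sign (b i)) * y i| = (|b i| - lam2) * |y i| := by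
          rw [abs_mul, habs]
        nlinarith
      rw [hf z, ez1, ez2, ez3, hg y] at *
      linarith
  linarith
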